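/- arXiv:1508.01348 — 2 statements merged into one kernel-verified Lean document; each statement's English description precedes it below -/
import Mathlib

section
/- If n ≥ 4 is a power of 2, then the exponent of the Weyl group W(Dₙ) = Vₑ ⋊ Sₙ equals the exponent of the symmetric group Sₙ. -/
open Multiplicative

abbrev Vn (n : ℕ) := Multiplicative (Fin n → ZMod 2)

def permAut (n : ℕ) : Equiv.Perm (Fin n) →* MulAut (Vn n) where
  toFun σ :=
    { toFun := fun v => ofAdd fun i => toAdd v (σ⁻¹ i)
      invFun := fun v => ofAdd fun i => toAdd v (σ i)
      left_inv := fun v => by simp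
      right_inv := fun v => by simp
      map_mul' := fun v w => rfl }
  map_one' := rfl
  map_mul' := fun σ τ => rfl

@[simp] lemma permAut_apply (n : ℕ) (σ : Equiv.Perm (Fin n)) (v : Vn n) (i : Fin n) :
    toAdd (permAut n σ v) i = toAdd v (σ⁻¹ i) := rfl

def Ve (n : ℕ) : Subgroup (Vn n) where
  carrier := {v | ∑ i, toAdd v i = 0}
  one_mem' := by simp
  mul_mem' := by
    intro a b ha hb
    simp only [Set.mem_setOf_eq, toAdd_mul, Pi.add_apply, Finset.sum_add_distrib] at *
    rw [ha, hb, add_zero]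
  inv_mem' := by
    intro a ha
    simp only [Set.mem_setOf_eq, toAdd_inv, Pi.neg_apply, Finset.sum_neg_distrib] at *
    rw [ha, neg_zero]

lemma permAut_mem_Ve {n : ℕ} (σ : Equiv.Perm (Fin n)) {v : Vn n} (hv : v ∈ Ve n) :
    permAut n σ v ∈ Ve n := by
  have h : ∑ i, toAdd v (σ⁻¹ i) = ∑ i, toAdd v i := Equiv.sum_comp σ⁻¹ (toAdd v)
  show ∑ i, toAdd (permAut n σ v) i = 0
  exact h.trans (show ∑ i, toAdd v i = 0 from hv)

def permAutVe (n : ℕ) : Equiv.Perm (Fin n) →* MulAut (Ve n) where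
  toFun σ :=
    { toFun := fun v => ⟨permAut n σ (v : Vn n), permAut_mem_Ve σ v.2⟩
      invFun := fun v => ⟨permAut n σ⁻¹ (v : Vn n), permAut_mem_Ve σ⁻¹ v.2⟩
      left_inv := fun v => Subtype.ext <| Multiplicative.toAdd.injective <| funext fun i => by simp
      right_inv := fun v => Subtype.ext <| Multiplicative.toAdd.injective <| funext fun i => by simp
      map_mul' := fun v w => Subtype.ext (map_mul (permAut n σ) (v : Vn n) (w : Vn n)) }
  map_one' := rfl
  map_mul' := fun σ τ => rfl

/-- The Weyl group of `Bₙ` (equivalently `Cₙ`). -/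
abbrev WB (n : ℕ) := Vn n ⋊[permAut n] Equiv.Perm (Fin n)

/-- The Weyl group of `Dₙ`. -/
abbrev WD (n : ℕ) := Ve n ⋊[permAutVe n] Equiv.Perm (Fin n)

/-- Folding a periodic sum. -/
lemma periodic_sum_fold (f : ℕ → ZMod 2) (c : ℕ) (hc : ∀ j, f (j + c) = f j) (q : ℕ) :
    ∑ j ∈ Finset.range (q * c), f j = q • ∑ j ∈ Finset.range c, f j := by
  have key : ∀ a j, f (j + a * c) = f j := by
    intro a
    induction a with
    | zero => simp
    | succ a ih =>
      intro j
      have : j + (a + 1) * c = (j + a * c) + c := by ring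
      rw [this, hc, ih]
  induction q with
  | zero => simp
  | succ q ih =>
    rw [Nat.succ_mul, Finset.sum_range_add, ih, succ_nsmul]
    congr 1
    refine Finset.sum_congr rfl fun j _ => ?_
    rw [Nat.add_comm (q * c) j, key]

lemma WD_pow_mk (n : ℕ) (v : Ve n) (σ : Equiv.Perm (Fin n)) (m : ℕ) :
    (⟨v, σ⟩ : WD n) ^ m = ⟨∏ j ∈ Finset.range m, permAutVe n (σ ^ j) v, σ ^ m⟩ := by
  induction m with
  | zero => rfl
  | succ m ih =>
    rw [pow_succ, ih, SemidirectProduct.mul_def]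
    exact SemidirectProduct.ext (by rw [Finset.prod_range_succ]) (pow_succ σ m).symm

/-- If `n ≥ 4` is a power of `2`, then the exponent of the Weyl group
`W(Dₙ) = Vₑ ⋊ Sₙ` equals the exponent of the symmetric group `Sₙ`. -/
theorem exponent_weylD_of_pow_two (n : ℕ) (hn : 4 ≤ n) (h2 : ∃ k : ℕ, n = 2 ^ k) :
    Monoid.exponent (WD n) = Monoid.exponent (Equiv.Perm (Fin n)) := by
  obtain ⟨k, hk⟩ := h2
  set E := Monoid.exponent (Equiv.Perm (Fin n)) with hE
  have hnE : n ∣ E := by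
    have h2n : 2 ≤ n := by omega
    have horder : orderOf (finRotate n) = n := by
      rw [(isCycle_finRotate_of_le h2n).orderOf, support_finRotate_of_le h2n,
        Finset.card_univ, Fintype.card_fin]
    exact horder ▸ Monoid.order_dvd_exponent (finRotate n)
  refine Nat.dvd_antisymm ?_ (MonoidHom.exponent_dvd SemidirectProduct.rightHom_surjective)
  rw [Monoid.exponent_dvd_iff_forall_pow_eq_one]
  rintro ⟨v, σ⟩
  rw [WD_pow_mk]
  refine SemidirectProduct.ext ?_ (Monoid.pow_exponent_eq_one σ)
  show (∏ j ∈ Finset.range E, permAutVe n (σ ^ j) v) = (1 : Ve n)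
  apply Subtype.ext
  apply Multiplicative.toAdd.injective
  funext i
  have hcoe : ((∏ j ∈ Finset.range E, permAutVe n (σ ^ j) v : Ve n) : Vn n)
      = ∏ j ∈ Finset.range E, permAut n (σ ^ j) (v : Vn n) := by
    rw [SubmonoidClass.coe_finset_prod]
    rfl
  rw [hcoe, toAdd_prod]
  show (∑ j ∈ Finset.range E, toAdd (permAut n (σ ^ j) (v : Vn n))) i = toAdd (1 : Vn n) i
  rw [Finset.sum_apply]
  simp only [permAut_apply]
  -- reduce to a sum over iterates of τ = σ⁻¹
  set τ : Equiv.Perm (Fin n) := σ⁻¹ with hτ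
  set w : Fin n → ZMod 2 := fun x => toAdd (v : Vn n) x with hw
  set f : ℕ → ZMod 2 := fun j => w ((⇑τ)^[j] i) with hf
  have hterm : ∀ j, toAdd (v : Vn n) ((σ ^ j)⁻¹ i) = f j := by
    intro j
    simp only [hf, hw, Equiv.Perm.iterate_eq_pow, hτ, inv_pow]
  rw [Finset.sum_congr rfl fun j _ => hterm j]
  have hv0 : ∑ x, w x = 0 := v.2
  -- order of τ
  have hd0 : 0 < orderOf τ := orderOf_pos τ
  set d : ℕ := orderOf τ with hd
  have hdE : d ∣ E := by
    rw [hd, hτ, orderOf_inv]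
    exact Monoid.order_dvd_exponent σ
  set q : ℕ := E / d with hq
  have hEq : E = q * d := (Nat.div_mul_cancel hdE).symm
  have hiter : ∀ m : ℕ, d ∣ m → (⇑τ)^[m] i = i := by
    intro m hm
    rw [Equiv.Perm.iterate_eq_pow, orderOf_dvd_iff_pow_eq_one.mp hm]
    rfl
  have hpd : ∀ j, f (j + d) = f j := by
    intro j
    simp only [hf, Function.iterate_add_apply, hiter d dvd_rfl]
  rw [hEq, periodic_sum_fold f d hpd q]
  show q • ∑ j ∈ Finset.range d, f j = 0
  rcases Nat.even_or_odd q with hqe | hqo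
  · obtain ⟨r, hr⟩ := hqe
    rw [hr]
    set T := ∑ j ∈ Finset.range d, f j
    rw [add_nsmul]
    have : T + T = 0 := by
      have := ZMod.natCast_self 2
      calc T + T = 2 * T := by ring
        _ = 0 := by rw [show ((2 : ZMod 2)) = 0 by decide, zero_mul]
    rw [← add_nsmul] at *
    rw [show r + r = 2 * r by ring, mul_nsmul]
    rw [show (2 : ℕ) • T = T + T from two_nsmul T, this, smul_zero]
  · -- q odd: 2^k = n divides d
    have hcopq : Nat.Coprime n q := by
      rw [hk]
      exact Nat.Coprime.pow_left k ((Nat.Prime.coprime_iff_not_dvd Nat.prime_two).mpr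
        (by have := Nat.odd_iff.mp hqo; omega))
    have hnd : n ∣ d := hcopq.dvd_of_dvd_mul_left (hEq ▸ hnE)
    -- minimal period of i under τ
    set c : ℕ := Function.minimalPeriod (⇑τ) i with hcdef
    have hper : Function.IsPeriodicPt (⇑τ) d i := hiter d dvd_rfl
    have hcd : c ∣ d := hper.minimalPeriod_dvd
    have hc0 : 0 < c := hper.minimalPeriod_pos hd0
    have hpc : ∀ j, f (j + c) = f j := by
      intro j
      have hcfix : (⇑τ)^[c] i = i := by rw [hcdef]; exact Function.iterate_minimalPeriod
      simp only [hf, Function.iterate_add_apply, hcfix]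
    set r : ℕ := d / c with hr
    have hdr : d = r * c := (Nat.div_mul_cancel hcd).symm
    rw [hdr, periodic_sum_fold f c hpc r]
    rcases Nat.even_or_odd r with hre | hro
    · obtain ⟨s, hs⟩ := hre
      set U := ∑ j ∈ Finset.range c, f j
      rw [hs, ← two_mul, mul_nsmul, two_nsmul]
      have : U + U = 0 := by
        calc U + U = 2 * U := by ring
          _ = 0 := by rw [show ((2 : ZMod 2)) = 0 by decide, zero_mul]
      rw [this, smul_zero, smul_zero]
    · -- r odd: n ∣ c, and c ≤ n, so c = n and the orbit of i is everything
      have hcopr : Nat.Coprime n r := by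
        rw [hk]
        exact Nat.Coprime.pow_left k ((Nat.Prime.coprime_iff_not_dvd Nat.prime_two).mpr
          (by have := Nat.odd_iff.mp hro; omega))
      have hnc : n ∣ c := hcopr.dvd_of_dvd_mul_left (hdr ▸ hnd)
      have hcle : c ≤ n := by
        have hle := Finset.card_le_card_of_injOn (f := fun j => (⇑τ)^[j] i)
          (fun a _ => Finset.mem_univ _)
          (fun a ha b hb h => Function.iterate_injOn_Iio_minimalPeriod
            (Set.mem_Iio.mpr (Finset.mem_range.mp ha))
            (Set.mem_Iio.mpr (Finset.mem_range.mp hb)) h)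
        simpa using hle
      have hcn : c = n := le_antisymm hcle (Nat.le_of_dvd hc0 hnc)
      have himg : (Finset.range c).image (fun j => (⇑τ)^[j] i) = Finset.univ := by
        apply Finset.eq_univ_of_card
        rw [Finset.card_image_of_injOn
          (fun a ha b hb h => Function.iterate_injOn_Iio_minimalPeriod
            (Set.mem_Iio.mpr (Finset.mem_range.mp ha))
            (Set.mem_Iio.mpr (Finset.mem_range.mp hb)) h),
          Finset.card_range]
        exact hcn.trans (Fintype.card_fin n).symm
      have hU : ∑ j ∈ Finset.range c, f j = 0 := by
        have := Finset.sum_image (f := w) (g := fun j => (⇑τ)^[j] i) (s := Finset.range c)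
          (fun a ha b hb h => Function.iterate_injOn_Iio_minimalPeriod
            (Set.mem_Iio.mpr (Finset.mem_range.mp ha))
            (Set.mem_Iio.mpr (Finset.mem_range.mp hb)) h)
        rw [hf]
        rw [← this, himg, hv0]
      rw [hU, smul_zero, smul_zero]
end

section
/- If n ≥ 3 is not a power of 2, then the exponent of the Weyl group W(Dₙ) = Vₑ ⋊ Sₙ equals twice the exponent of the symmetric group Sₙ. -/
open Multiplicative

section Aux

open Finset

/-- A prime power dividing a binary lcm divides one of the factors. -/
lemma pow_dvd_of_dvd_nat_lcm {p k a b : ℕ} (hp : p.Prime) (ha : a ≠ 0) (hb : b ≠ 0)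
    (h : p ^ k ∣ Nat.lcm a b) : p ^ k ∣ a ∨ p ^ k ∣ b := by
  rw [Nat.Prime.pow_dvd_iff_le_factorization hp (Nat.lcm_ne_zero ha hb),
    Nat.factorization_lcm ha hb, Finsupp.sup_apply, le_sup_iff] at h
  rcases h with h | h
  · exact Or.inl ((Nat.Prime.pow_dvd_iff_le_factorization hp ha).mpr h)
  · exact Or.inr ((Nat.Prime.pow_dvd_iff_le_factorization hp hb).mpr h)

lemma finset_lcm_ne_zero (s : Finset ℕ) (hs : ∀ i ∈ s, i ≠ 0) : s.lcm id ≠ 0 := by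
  induction s using Finset.induction_on with
  | empty => simp
  | insert a s ha ih =>
    rw [Finset.lcm_insert, lcm_eq_nat_lcm]
    exact Nat.lcm_ne_zero (hs a (mem_insert_self a s)) (ih fun i hi => hs i (mem_insert_of_mem hi))

lemma pow_dvd_finset_lcm {p k : ℕ} (hp : p.Prime) (hk : k ≠ 0) (s : Finset ℕ)
    (hs : ∀ i ∈ s, i ≠ 0) (h : p ^ k ∣ s.lcm id) : ∃ i ∈ s, p ^ k ∣ i := by
  induction s using Finset.induction_on with
  | empty =>
    simp only [Finset.lcm_empty, Nat.dvd_one, pow_eq_one_iff, hk, or_false] at h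
    exact absurd h hp.one_lt.ne'
  | insert a s ha ih =>
    rw [Finset.lcm_insert, lcm_eq_nat_lcm] at h
    rcases pow_dvd_of_dvd_nat_lcm hp (hs a (mem_insert_self a s))
      (finset_lcm_ne_zero s fun i hi => hs i (mem_insert_of_mem hi)) h with h' | h'
    · exact ⟨a, mem_insert_self a s, h'⟩
    · obtain ⟨i, hi, hd⟩ := ih (fun i hi => hs i (mem_insert_of_mem hi)) h'
      exact ⟨i, mem_insert_of_mem hi, hd⟩

end Aux

section WDLemmas

open Finset

lemma ve_mul_self {n : ℕ} (w : Ve n) : w * w = 1 := by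
  apply Subtype.ext
  apply Multiplicative.toAdd.injective
  funext i
  show toAdd ((w : Vn n) * (w : Vn n)) i = toAdd (1 : Vn n) i
  simp only [toAdd_mul, Pi.add_apply, toAdd_one, Pi.zero_apply]
  exact CharTwo.add_self_eq_zero _

lemma wd_pow (n : ℕ) (v : Ve n) (σ : Equiv.Perm (Fin n)) (k : ℕ) :
    ((⟨v, σ⟩ : WD n) ^ k) = ⟨∏ i ∈ Finset.range k, permAutVe n (σ ^ i) v, σ ^ k⟩ := by
  induction k with
  | zero => simp
  | succ k ih =>
    rw [pow_succ, ih, SemidirectProduct.mul_def]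
    exact SemidirectProduct.ext (by rw [Finset.prod_range_succ]) (by rw [pow_succ])

lemma exponent_perm_dvd_wd (n : ℕ) :
    Monoid.exponent (Equiv.Perm (Fin n)) ∣ Monoid.exponent (WD n) := by
  apply Monoid.exponent_dvd_of_forall_pow_eq_one
  intro σ
  apply SemidirectProduct.inr_injective (φ := permAutVe n)
  rw [map_pow, map_one, Monoid.pow_exponent_eq_one]

lemma exponent_wd_dvd (n : ℕ) :
    Monoid.exponent (WD n) ∣ 2 * Monoid.exponent (Equiv.Perm (Fin n)) := by
  apply Monoid.exponent_dvd_of_forall_pow_eq_one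
  intro g
  set E := Monoid.exponent (Equiv.Perm (Fin n))
  have hr : (g ^ E).right = 1 := by
    rw [← SemidirectProduct.rightHom_eq_right, map_pow, SemidirectProduct.rightHom_eq_right,
      Monoid.pow_exponent_eq_one]
  rw [mul_comm, pow_mul]
  have h2 : (g ^ E) * (g ^ E) = 1 := by
    rw [SemidirectProduct.mul_def]
    refine SemidirectProduct.ext ?_ ?_
    · show (g ^ E).left * (permAutVe n (g ^ E).right) (g ^ E).left = 1
      rw [hr, map_one]
      exact ve_mul_self _
    · show (g ^ E).right * (g ^ E).right = 1
      rw [hr, mul_one]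
  rw [sq, h2]

end WDLemmas

/-- If `n ≥ 3` is not a power of `2`, then the exponent of the Weyl group
`W(Dₙ) = Vₑ ⋊ Sₙ` equals twice the exponent of the symmetric group `Sₙ`. -/
theorem exponent_weylD_of_not_pow_two (n : ℕ) (hn : 3 ≤ n) (h2 : ¬ ∃ k : ℕ, n = 2 ^ k) :
    Monoid.exponent (WD n) = 2 * Monoid.exponent (Equiv.Perm (Fin n)) := by
  obtain ⟨m, rfl⟩ : ∃ m, n = m + 1 := ⟨n - 1, by omega⟩
  set n := m + 1 with hn_def
  set E := Monoid.exponent (Equiv.Perm (Fin n)) with hE_def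
  have hE0 : E ≠ 0 := Monoid.exponent_ne_zero_of_finite
  set a := Nat.log 2 n with ha_def
  set N := 2 ^ a with hN_def
  have hNle : N ≤ n := Nat.pow_log_le_self 2 (by omega)
  have hNlt : N < n := lt_of_le_of_ne hNle (fun h => h2 ⟨a, h.symm⟩)
  have ha1 : 1 ≤ a := by
    rw [ha_def]
    exact (Nat.le_log_iff_pow_le one_lt_two (by omega)).mpr (by omega : 2 ^ 1 ≤ n)
  have hN2 : 2 ≤ N := by
    calc 2 = 2 ^ 1 := (pow_one 2).symm
    _ ≤ N := Nat.pow_le_pow_right (by norm_num) ha1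
  -- the cycle of length N
  set i₀ : Fin n := ⟨N - 1, by omega⟩ with hi₀_def
  have hi₀0 : i₀ ≠ 0 := by
    intro h
    have := congrArg Fin.val h
    simp only [hi₀_def, Fin.val_zero] at this
    omega
  set σc : Equiv.Perm (Fin n) := Fin.cycleRange i₀ with hσc_def
  have hcyc : σc.IsCycle := Fin.isCycle_cycleRange hi₀0
  have hct : σc.cycleType = {N} := by
    rw [hσc_def, Fin.cycleType_cycleRange hi₀0]
    congr 1
    simp only [hi₀_def]
    omega
  have hsupp : σc.support.card = N := by
    rw [← Equiv.Perm.sum_cycleType, hct, Multiset.sum_singleton]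
  have horder : orderOf σc = N := by rw [hcyc.orderOf, hsupp]
  have hND : N ∣ E := horder ▸ Monoid.order_dvd_exponent σc
  -- 2^(a+1) does not divide E
  have hnd : ¬ (2 ^ (a + 1) ∣ E) := by
    intro hdvd
    have hEL : E ∣ (Finset.Icc 1 n).lcm id := by
      apply Monoid.exponent_dvd_of_forall_pow_eq_one
      intro σ
      rw [← orderOf_dvd_iff_pow_eq_one, ← Equiv.Perm.lcm_cycleType, Multiset.lcm_dvd]
      intro l hl
      have h1 : 2 ≤ l := Equiv.Perm.two_le_of_mem_cycleType hl
      have h2' : l ≤ n := by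
        have hls := Equiv.Perm.le_card_support_of_mem_cycleType hl
        have hcard : σ.support.card ≤ n := by
          simpa using Finset.card_le_univ σ.support
        omega
      exact Finset.dvd_lcm (Finset.mem_Icc.mpr ⟨by omega, h2'⟩)
    obtain ⟨i, hi, hdi⟩ := pow_dvd_finset_lcm Nat.prime_two (by omega) _
      (fun i hi => by simp only [Finset.mem_Icc] at hi; omega) (hdvd.trans hEL)
    simp only [Finset.mem_Icc] at hi
    have hle : 2 ^ (a + 1) ≤ i := Nat.le_of_dvd (by omega) hdi
    have hlt : n < 2 ^ (a + 1) := Nat.lt_pow_succ_log_self one_lt_two n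
    omega
  -- q is odd
  set q := E / N with hq_def
  have hEq : E = N * q := (Nat.mul_div_cancel' hND).symm
  have hqodd : q % 2 = 1 := by
    rcases Nat.even_or_odd q with he | ho
    · exfalso
      obtain ⟨r, hr⟩ := he
      exact hnd ⟨r, by rw [hEq, hr, hN_def, pow_succ]; ring⟩
    · exact Nat.odd_iff.mp ho
  -- the vector v
  set vv : Vn n := Multiplicative.ofAdd (Pi.single (0 : Fin n) (1 : ZMod 2)
      + Pi.single (Fin.last m) 1) with hvv_def
  have hlast0 : (Fin.last m : Fin n) ≠ 0 := by
    intro h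
    have := congrArg Fin.val h
    simp only [Fin.val_last, Fin.val_zero] at this
    omega
  have hvmem : vv ∈ Ve n := by
    show ∑ i, toAdd vv i = 0
    simp only [hvv_def, toAdd_ofAdd, Pi.add_apply, Finset.sum_add_distrib]
    rw [Finset.sum_pi_single', Finset.sum_pi_single']
    simp only [Finset.mem_univ, if_true]
    exact CharTwo.add_self_eq_zero _
  -- key facts about σc
  have hi₀lt : i₀ < Fin.last m := by
    rw [Fin.lt_iff_val_lt_val]
    simp only [hi₀_def, Fin.val_last]
    omega
  have hfixlast : σc (Fin.last m) = Fin.last m := Fin.cycleRange_of_gt hi₀lt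
  have h0supp : (0 : Fin n) ∈ σc.support := by
    rw [Equiv.Perm.mem_support]
    have h0lt : (0 : Fin n) < i₀ := by
      rw [Fin.lt_iff_val_lt_val]
      simp only [hi₀_def, Fin.val_zero]
      omega
    rw [hσc_def, Fin.cycleRange_of_lt h0lt]
    intro h
    have hv := congrArg Fin.val h
    rw [Fin.val_add_one_of_lt (lt_of_lt_of_le h0lt (Fin.le_last i₀))] at hv
    simp at hv
  have hcycleOn : σc.IsCycleOn (σc.support : Set (Fin n)) := by
    have h := hcyc.isCycleOn
    rwa [Equiv.Perm.coe_support_eq_set_support]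
  have hperiod : ∀ i : ℕ, (σc ^ i) 0 = 0 ↔ N ∣ i := by
    intro i
    rw [hcycleOn.pow_apply_eq h0supp, hsupp]
  -- the term values
  have hterm : ∀ i : ℕ, toAdd vv ((σc ^ i)⁻¹ 0) = if N ∣ i then 1 else 0 := by
    intro i
    set x : Fin n := (σc ^ i)⁻¹ 0 with hx_def
    have hxlast : x ≠ Fin.last m := by
      intro h
      have h1 : (σc ^ i) x = 0 := by rw [hx_def]; simp
      rw [h, Equiv.Perm.pow_apply_eq_self_of_apply_eq_self hfixlast] at h1
      exact hlast0 h1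
    have hx0 : x = 0 ↔ N ∣ i := by
      rw [hx_def, Equiv.Perm.inv_eq_iff_eq, eq_comm, hperiod i]
    have hvx : toAdd vv x = ((Pi.single (0 : Fin n) (1 : ZMod 2)
        + Pi.single (Fin.last m) 1 : Fin n → ZMod 2)) x := by rw [hvv_def, toAdd_ofAdd]
    rw [hvx, Pi.add_apply, Pi.single_eq_of_ne hxlast, add_zero, Pi.single_apply]
    simp only [hx0]
  -- the element g and g ^ E ≠ 1
  set g : WD n := ⟨⟨vv, hvmem⟩, σc⟩ with hg_def
  have hgE : g ^ E ≠ 1 := by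
    intro hone
    have heq := (wd_pow n ⟨vv, hvmem⟩ σc E).symm.trans hone
    have hprodeq := congrArg SemidirectProduct.left heq
    simp only [SemidirectProduct.one_left] at hprodeq
    have hcoe : ((∏ i ∈ Finset.range E, permAutVe n (σc ^ i) (⟨vv, hvmem⟩ : Ve n) : Ve n) : Vn n)
        = 1 := by rw [hprodeq]; rfl
    rw [SubmonoidClass.coe_finset_prod] at hcoe
    have hsum := congrFun (congrArg Multiplicative.toAdd hcoe) 0
    rw [toAdd_prod] at hsum
    simp only [Finset.sum_apply, toAdd_one, Pi.zero_apply] at hsum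
    have hsum' : ∑ i ∈ Finset.range E, toAdd vv ((σc ^ i)⁻¹ 0) = 0 := hsum
    rw [Finset.sum_congr rfl (fun i _ => hterm i)] at hsum'
    rw [Finset.sum_boole] at hsum'
    have hfilter : (Finset.range E).filter (fun i => N ∣ i) =
        (Finset.range q).image (fun j => N * j) := by
      ext i
      simp only [Finset.mem_filter, Finset.mem_range, Finset.mem_image]
      constructor
      · rintro ⟨hiE, c, rfl⟩
        rw [hEq] at hiE
        exact ⟨c, lt_of_mul_lt_mul_left hiE (by omega), rfl⟩
      · rintro ⟨j, hj, rfl⟩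
        refine ⟨?_, ⟨j, rfl⟩⟩
        rw [hEq]
        exact mul_lt_mul_of_pos_left hj (by omega : (0 : ℕ) < N)
    rw [hfilter, Finset.card_image_of_injective _
      (fun x y hxy => by simpa using Nat.eq_of_mul_eq_mul_left (by omega : 0 < N) hxy)] at hsum'
    rw [Finset.card_range] at hsum'
    have hqcast : ((q : ℕ) : ZMod 2) = 1 := by
      have : q = 2 * (q / 2) + 1 := by omega
      rw [this]
      push_cast
      rw [show (2 : ZMod 2) = 0 by decide]
      ring
    rw [hqcast] at hsum'
    exact one_ne_zero hsum'
  -- conclusion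
  have hdvd1 : E ∣ Monoid.exponent (WD n) := exponent_perm_dvd_wd n
  have hdvd2 : Monoid.exponent (WD n) ∣ 2 * E := exponent_wd_dvd n
  obtain ⟨t, ht⟩ := hdvd1
  have htdvd : t ∣ 2 := by
    rw [ht, mul_comm 2 E] at hdvd2
    exact (Nat.mul_dvd_mul_iff_left (Nat.pos_of_ne_zero hE0)).mp hdvd2
  rcases (Nat.prime_two.eq_one_or_self_of_dvd t htdvd) with h1 | h1
  · exfalso
    apply hgE
    have : Monoid.exponent (WD n) = E := by rw [ht, h1, mul_one]
    rw [← this]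
    exact Monoid.pow_exponent_eq_one g
  · rw [ht, h1, mul_comm]
end
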